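/- Let e be a memory location, and let L ≤ e ≤ R be the nearest cached locations on each side, with d_L = e − L < B and d_R = R − e < B. Under a uniformly random shift s ∈ [0, B), the probability that e lies in a different block of size B from both L and R equals max((d_L + d_R)/B − 1, 0). -/
import Mathlib


open Finset

/-- Crossing a block boundary: `(x+d)/B ≠ x/B ↔ B ≤ x % B + d` for `d < B`. -/
lemma crossing_iff (B x d : ℕ) (hB : 0 < B) (hd : d < B) :
    (x + d) / B ≠ x / B ↔ B ≤ x % B + d := by
  rw [Nat.add_div hB, Nat.div_eq_of_lt hd, Nat.mod_eq_of_lt hd]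
  rcases le_or_gt B (x % B + d) with h | h
  · rw [if_pos h]
    simp [h]
  · rw [if_neg (not_le.mpr h)]
    simp [h, not_le.mpr h]

/-- Crossing a block boundary, in terms of the mod of the right endpoint. -/
lemma crossing_iff' (B x d : ℕ) (hB : 0 < B) (hd : d < B) :
    (x + d) / B ≠ x / B ↔ (x + d) % B < d := by
  rw [crossing_iff B x d hB hd, Nat.add_mod, Nat.mod_eq_of_lt hd]
  have hr : x % B < B := Nat.mod_lt x hB
  set r := x % B with hrdef
  rcases le_or_gt B (r + d) with h | h
  · have h2 : (r + d) % B = r + d - B := by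
      rw [Nat.mod_eq_sub_mod h, Nat.mod_eq_of_lt (by omega)]
    rw [h2]
    omega
  · rw [Nat.mod_eq_of_lt h]
    omega

lemma rotate_sum (B : ℕ) (f : ℕ → ℝ) :
    ∑ s ∈ Finset.range B, f ((s + 1) % B) = ∑ s ∈ Finset.range B, f s := by
  cases B with
  | zero => simp
  | succ n =>
    rw [Finset.sum_range_succ, Finset.sum_range_succ' f]
    congr 1
    · refine Finset.sum_congr rfl fun s hs => ?_
      rw [Nat.mod_eq_of_lt (by have := Finset.mem_range.mp hs; omega)]
    · rw [Nat.mod_self]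

lemma cycle_sum (B e : ℕ) (f : ℕ → ℝ) :
    ∑ s ∈ Finset.range B, f ((e + s) % B) = ∑ t ∈ Finset.range B, f t := by
  induction e generalizing f with
  | zero =>
    exact Finset.sum_congr rfl fun s hs => by
      rw [Nat.zero_add, Nat.mod_eq_of_lt (Finset.mem_range.mp hs)]
  | succ e ih =>
    have h : ∀ s, (e + 1 + s) % B = ((e + s) % B + 1) % B := by
      intro s
      rw [Nat.mod_add_mod]
      congr 1
      omega
    calc ∑ s ∈ Finset.range B, f ((e + 1 + s) % B)
        = ∑ s ∈ Finset.range B, (fun t => f ((t + 1) % B)) ((e + s) % B) := by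
          simp only [h]
      _ = ∑ t ∈ Finset.range B, f ((t + 1) % B) := ih (fun t => f ((t + 1) % B))
      _ = ∑ t ∈ Finset.range B, f t := rotate_sum B f

/-- Under a uniformly random shift `s ∈ [0,B)`, the probability that location `e`
lies in a different block of size `B` from both its nearest cached neighbours `L`
(to the left, distance `< B`) and `R` (to the right, distance `< B`) equals
`max((d_L + d_R)/B − 1, 0)`. -/
theorem random_shift_miss_probability (B L e R : ℕ) (hB : 1 ≤ B)
    (hLe : L ≤ e) (heR : e ≤ R) (hdL : e - L < B) (hdR : R - e < B) :
    (1 / (B : ℝ)) * ∑ s ∈ Finset.range B,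
        (if (e + s) / B ≠ (L + s) / B ∧ (e + s) / B ≠ (R + s) / B then (1 : ℝ) else 0)
      = max ((((e - L : ℕ) : ℝ) + ((R - e : ℕ) : ℝ)) / B - 1) 0 := by
  have hBpos : 0 < B := hB
  set dL := e - L with hdLdef
  set dR := R - e with hdRdef
  have hcond : ∀ s, ((e + s) / B ≠ (L + s) / B ∧ (e + s) / B ≠ (R + s) / B)
      ↔ ((e + s) % B < dL ∧ B ≤ (e + s) % B + dR) := by
    intro s
    have h1 : e + s = (L + s) + dL := by omega
    have h2 : R + s = (e + s) + dR := by omega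
    constructor
    · rintro ⟨c1, c2⟩
      constructor
      · have := (crossing_iff' B (L + s) dL hBpos hdL).mp (by rw [← h1]; exact c1)
        rwa [← h1] at this
      · exact (crossing_iff B (e + s) dR hBpos hdR).mp (by rw [← h2]; exact c2.symm)
    · rintro ⟨c1, c2⟩
      constructor
      · rw [h1]
        exact (crossing_iff' B (L + s) dL hBpos hdL).mpr (by rw [← h1]; exact c1)
      · have hcr := (crossing_iff B (e + s) dR hBpos hdR).mpr c2
        rw [← h2] at hcr
        exact fun hx => hcr hx.symm
  have hsum1 : ∑ s ∈ Finset.range B,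
        (if (e + s) / B ≠ (L + s) / B ∧ (e + s) / B ≠ (R + s) / B then (1 : ℝ) else 0)
      = ∑ s ∈ Finset.range B,
        (fun t => if t < dL ∧ B ≤ t + dR then (1 : ℝ) else 0) ((e + s) % B) := by
    refine Finset.sum_congr rfl fun s _ => ?_
    exact if_congr (hcond s) rfl rfl
  rw [hsum1, cycle_sum B e (fun t => if t < dL ∧ B ≤ t + dR then (1 : ℝ) else 0)]
  have hfilter : Finset.filter (fun t => t < dL ∧ B ≤ t + dR) (Finset.range B)
      = Finset.Ico (B - dR) dL := by
    ext t
    simp only [Finset.mem_filter, Finset.mem_range, Finset.mem_Ico]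
    omega
  have hsum2 : ∑ t ∈ Finset.range B, (if t < dL ∧ B ≤ t + dR then (1 : ℝ) else 0)
      = ((dL - (B - dR) : ℕ) : ℝ) := by
    rw [Finset.sum_boole, hfilter, Nat.card_Ico]
  rw [hsum2]
  have hBR : (0 : ℝ) < (B : ℝ) := by exact_mod_cast hBpos
  rcases le_or_gt (dL + dR) B with h | h
  · rw [show dL - (B - dR) = 0 from by omega]
    rw [max_eq_right]
    · simp
    · have : ((dL : ℝ) + dR) / B ≤ 1 := by
        rw [div_le_one hBR]
        exact_mod_cast h
      linarith
  · rw [show dL - (B - dR) = dL + dR - B from by omega]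
    rw [max_eq_left]
    · rw [Nat.cast_sub (by omega)]
      push_cast
      field_simp
    · have : (1 : ℝ) ≤ ((dL : ℝ) + dR) / B := by
        rw [le_div_iff₀ hBR]
        simp only [one_mul]
        exact_mod_cast h.le
      linarith
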